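/- Suppose the payoff function is linear in beliefs: w(μ, θ_i) = ∑_j μ(θ_j) ρ(θ_j) = μᵀρ for a fixed vector ρ ∈ ℝ^N. Then w ∈ W if and only if there exists a completely positive matrix C ∈ ℝ^{N×N} with C·e = μ₀ (rows summing to the prior) such that w = D₀ C ρ, where D₀ is the diagonal matrix with entries 1/μ₀(θ_i) and e is the all-ones vector. -/

import Mathlib

open Filter Topology

private lemma isCompact_convexHull_compact {E : Type} [NormedAddCommGroup E] [NormedSpace ℝ E]
    [FiniteDimensional ℝ E] {K : Set E} (hK : IsCompact K) : IsCompact (convexHull ℝ K) := by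
  classical
  rcases K.eq_empty_or_nonempty with h | ⟨x0, hx0⟩
  · simp [h]
  set n := Module.finrank ℝ E + 1 with hn
  have hD : IsCompact ((stdSimplex ℝ (Fin n)) ×ˢ (Set.univ.pi fun _ : Fin n => K)) :=
    (isCompact_stdSimplex _ _).prod (isCompact_univ_pi fun _ => hK)
  have hf : Continuous (fun wp : (Fin n → ℝ) × (Fin n → E) => ∑ i, wp.1 i • wp.2 i) := by
    apply continuous_finset_sum
    intro i _
    exact ((continuous_apply i).comp continuous_fst).smul ((continuous_apply i).comp continuous_snd)
  have himg : convexHull ℝ K = (fun wp : (Fin n → ℝ) × (Fin n → E) => ∑ i, wp.1 i • wp.2 i) ''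
      ((stdSimplex ℝ (Fin n)) ×ˢ (Set.univ.pi fun _ : Fin n => K)) := by
    apply Set.Subset.antisymm
    · intro x hx
      obtain ⟨ι, hfin, zf, w, hrange, hind, hwpos, hwsum, hrep⟩ :=
        eq_pos_convex_span_of_mem_convexHull hx
      letI := hfin
      have hne : Nonempty ι := by
        by_contra hne
        rw [not_nonempty_iff] at hne
        rw [Finset.univ_eq_empty, Finset.sum_empty] at hwsum
        exact one_ne_zero hwsum.symm
      have hcard : Fintype.card ι ≤ n := by
        have h1 := hind.finrank_vectorSpan_add_one
        have h2 : Module.finrank ℝ (vectorSpan ℝ (Set.range zf)) ≤ Module.finrank ℝ E :=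
          Submodule.finrank_le _
        omega
      let emb : ι ↪ Fin n := (Fintype.equivFin ι).toEmbedding.trans (Fin.castLEEmb hcard)
      let w' : Fin n → ℝ := Function.extend emb w 0
      let p' : Fin n → E := Function.extend emb zf (fun _ => x0)
      have hw' : ∀ i, w' (emb i) = w i := fun i => emb.injective.extend_apply _ _ _
      have hp' : ∀ i, p' (emb i) = zf i := fun i => emb.injective.extend_apply _ _ _
      have hw'0 : ∀ j, (¬ ∃ i, emb i = j) → w' j = 0 := fun j hj =>
        Function.extend_apply' _ _ _ hj
      have hp'0 : ∀ j, (¬ ∃ i, emb i = j) → p' j = x0 := fun j hj =>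
        Function.extend_apply' _ _ _ hj
      have hsub : ∀ {α : Type} [AddCommMonoid α], ∀ (F : Fin n → α),
          (∀ j, (¬ ∃ i, emb i = j) → F j = 0) → ∑ j, F j = ∑ i, F (emb i) := by
        intro α _ F hF
        rw [← Finset.sum_image (f := F) (g := emb) (fun a _ b _ h => emb.injective h)]
        apply (Finset.sum_subset (Finset.subset_univ _) ?_).symm
        intro j _ hj
        apply hF
        simpa [Finset.mem_image] using hj
      refine ⟨(w', p'), ⟨⟨?_, ?_⟩, ?_⟩, ?_⟩
      · intro j
        show 0 ≤ w' j
        by_cases hj : ∃ i, emb i = j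
        · obtain ⟨i, rfl⟩ := hj
          rw [hw']; exact (hwpos i).le
        · rw [hw'0 j hj]
      · show ∑ j, w' j = 1
        rw [hsub w' hw'0]
        simpa [hw'] using hwsum
      · intro j _
        show p' j ∈ K
        by_cases hj : ∃ i, emb i = j
        · obtain ⟨i, rfl⟩ := hj
          rw [hp']; exact hrange (Set.mem_range_self i)
        · rw [hp'0 j hj]; exact hx0
      · show ∑ j, w' j • p' j = x
        have hsubE : ∑ j, w' j • p' j = ∑ i, w' (emb i) • p' (emb i) := by
          apply hsub (fun j => w' j • p' j)
          intro j hj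
          rw [hw'0 j hj, zero_smul]
        simp only [hsubE, hw', hp']
        exact hrep
    · rintro x ⟨⟨w, pp⟩, ⟨hw, hp⟩, rfl⟩
      exact (convex_convexHull ℝ K).sum_mem (fun i _ => hw.1 i) hw.2
        (fun i _ => subset_convexHull ℝ K (hp i (Set.mem_univ i)))
  rw [himg]
  exact hD.image hf

private lemma mem_of_hasSum_convex {E : Type} [NormedAddCommGroup E] [NormedSpace ℝ E]
    {S : Type} {T : Set E} (hconv : Convex ℝ T) (hclosed : IsClosed T)
    {c : S → ℝ} {p : S → E} (hc0 : ∀ s, 0 ≤ c s) (hc1 : HasSum c 1) (hp : ∀ s, p s ∈ T)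
    {z : E} (hz : HasSum (fun s => c s • p s) z) : z ∈ T := by
  classical
  cases isEmpty_or_nonempty S with
  | inl h =>
    have hc : c = fun _ => 0 := funext fun s => (h.elim s)
    rw [hc] at hc1
    exact absurd (hc1.unique hasSum_zero) one_ne_zero
  | inr h =>
  obtain ⟨s0⟩ := h
  have hφmem : ∀ F : Finset S,
      ((1 - ∑ s ∈ F, c s) • p s0 + ∑ s ∈ F, c s • p s) ∈ T := by
    intro F
    have hF1 : ∑ s ∈ F, c s ≤ 1 := sum_le_hasSum F (fun i _ => hc0 i) hc1
    have key := hconv.sum_mem (t := insert none (F.image some))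
      (w := fun o : Option S => o.elim (1 - ∑ s ∈ F, c s) c)
      (z := fun o : Option S => o.elim (p s0) p)
      (fun o _ => by
        cases o with
        | none => exact sub_nonneg.2 hF1
        | some s => exact hc0 s)
      (by
        rw [Finset.sum_insert (by simp)]
        rw [Finset.sum_image (fun a _ b _ h => Option.some_injective _ h)]
        simp)
      (fun o _ => by
        cases o with
        | none => exact hp s0
        | some s => exact hp s)
    rw [Finset.sum_insert (by simp),
      Finset.sum_image (fun a _ b _ h => Option.some_injective _ h)] at key
    simpa using key
  have h2 : Tendsto (fun F : Finset S => ∑ s ∈ F, c s) atTop (𝓝 1) := hc1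
  have h0 : Tendsto (fun F : Finset S => (1 - ∑ s ∈ F, c s)) atTop (𝓝 0) := by
    have := tendsto_const_nhds (x := (1:ℝ)) (f := atTop (α := Finset S))
    simpa using this.sub h2
  have h3 : Tendsto (fun F : Finset S =>
      (1 - ∑ s ∈ F, c s) • p s0 + ∑ s ∈ F, c s • p s) atTop (𝓝 z) := by
    have h4 := h0.smul_const (p s0)
    rw [zero_smul] at h4
    simpa using h4.add hz
  exact hclosed.mem_of_tendsto h3 (Filter.Eventually.of_forall hφmem)

/-- A matrix is completely positive if it is a finite sum of rank-one matrices
`x xᵀ` with `x` nonnegative. -/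
def CompletelyPositive {N : ℕ} (C : Matrix (Fin N) (Fin N) ℝ) : Prop :=
  ∃ (M : ℕ) (x : Fin M → Fin N → ℝ), (∀ m i, 0 ≤ x m i) ∧
    C = ∑ m, Matrix.vecMulVec (x m) (x m)

/-- Linear (expected reputation) payoffs: `v` is an interim payoff profile iff
`v = D₀ C ρ` for a completely positive matrix `C` with row sums `μ₀`. -/
theorem stmt5 {N : ℕ} (hN : 0 < N) (μ₀ ρ : Fin N → ℝ)
    (h₀pos : ∀ i, 0 < μ₀ i) (h₀sum : ∑ i, μ₀ i = 1)
    (v : Fin N → ℝ) :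
    (∃ (S : Type) (_ : Countable S) (π : Fin N → S → ℝ),
        (∀ i s, 0 ≤ π i s) ∧ (∀ i, HasSum (π i) 1) ∧
        ∀ i, v i = ∑' s, π i s *
          ∑ j, (μ₀ j * π j s / ∑ k, μ₀ k * π k s) * ρ j)
      ↔ ∃ C : Matrix (Fin N) (Fin N) ℝ,
          CompletelyPositive C ∧
          C.mulVec (fun _ => 1) = μ₀ ∧
          v = (Matrix.diagonal (fun i => (μ₀ i)⁻¹) * C).mulVec ρ := by
  constructor
  · rintro ⟨S, hS, π, hπ0, hπ1, hv⟩
    classical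
    set t : S → ℝ := fun s => ∑ k, μ₀ k * π k s with htdef
    have ht0 : ∀ s, 0 ≤ t s := fun s =>
      Finset.sum_nonneg fun k _ => mul_nonneg (h₀pos k).le (hπ0 k s)
    have ht1 : HasSum t 1 := by
      have h := hasSum_sum (s := (Finset.univ : Finset (Fin N)))
        (f := fun k (s : S) => μ₀ k * π k s) (a := fun k => μ₀ k)
        (fun k _ => by simpa using (hπ1 k).mul_left (μ₀ k))
      rw [h₀sum] at h
      exact h
    have hzero : ∀ s, t s = 0 → ∀ k, π k s = 0 := by
      intro s hs k
      have h := (Finset.sum_eq_zero_iff_of_nonneg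
        (fun k _ => mul_nonneg (h₀pos k).le (hπ0 k s))).1 hs k (Finset.mem_univ k)
      rcases mul_eq_zero.1 h with h' | h'
      · exact absurd h' (h₀pos k).ne'
      · exact h'
    -- the default posterior and the posterior map
    set e0 : Fin N → ℝ := fun j => if j = ⟨0, hN⟩ then 1 else 0 with he0def
    have he0 : e0 ∈ stdSimplex ℝ (Fin N) := by
      constructor
      · intro j
        simp only [he0def]
        split <;> norm_num
      · simp [he0def]
    set q : S → Fin N → ℝ :=
      fun s => if t s = 0 then e0 else fun j => μ₀ j * π j s / t s with hqdef
    have hq : ∀ s, q s ∈ stdSimplex ℝ (Fin N) := by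
      intro s
      by_cases hts : t s = 0
      · simp only [hqdef, if_pos hts]
        exact he0
      · simp only [hqdef, if_neg hts]
        constructor
        · intro j
          exact div_nonneg (mul_nonneg (h₀pos j).le (hπ0 j s)) (ht0 s)
        · rw [← Finset.sum_div, div_self hts]
    set g : (Fin N → ℝ) → (Fin N → ℝ) × (Fin N → ℝ) :=
      fun u => (u, (∑ j, u j * ρ j) • u) with hgdef
    have hgcont : Continuous g := by
      apply Continuous.prodMk continuous_id
      exact (continuous_finset_sum _ fun j _ =>
        (continuous_apply j).mul continuous_const).smul continuous_id
    set K : Set ((Fin N → ℝ) × (Fin N → ℝ)) := g '' stdSimplex ℝ (Fin N) with hKdef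
    have hKcomp : IsCompact K := (isCompact_stdSimplex _ _).image hgcont
    have hTclosed : IsClosed (convexHull ℝ K) := (isCompact_convexHull_compact hKcomp).isClosed
    set p : S → (Fin N → ℝ) × (Fin N → ℝ) := fun s => g (q s) with hpdef
    have hp : ∀ s, p s ∈ convexHull ℝ K :=
      fun s => subset_convexHull ℝ K ⟨q s, hq s, rfl⟩
    -- the sum of t s • p s
    have hfun : (fun s => t s • p s) = fun s =>
        ((fun j => μ₀ j * π j s),
         (fun j => (μ₀ j * π j s) * ∑ j', (μ₀ j' * π j' s / t s) * ρ j')) := by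
      funext s
      by_cases hts : t s = 0
      · have hz : ∀ k, π k s = 0 := hzero s hts
        rw [hts]
        ext j
        · simp [hz]
        · simp [hz]
      · have hqs : q s = fun j => μ₀ j * π j s / t s := by
          simp only [hqdef, if_neg hts]
        ext j
        · show t s * q s j = μ₀ j * π j s
          rw [hqs, mul_comm, div_mul_cancel₀ _ hts]
        · show t s * ((∑ j', q s j' * ρ j') * q s j)
              = (μ₀ j * π j s) * ∑ j', (μ₀ j' * π j' s / t s) * ρ j'
          rw [hqs]
          rw [mul_left_comm]
          rw [mul_comm (t s), div_mul_cancel₀ _ hts]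
          ring
    have hzsum : HasSum (fun s => t s • p s)
        (μ₀, fun i => μ₀ i * v i) := by
      rw [hfun]
      apply HasSum.prodMk
      · exact Pi.hasSum.2 fun j => by simpa using (hπ1 j).mul_left (μ₀ j)
      · apply Pi.hasSum.2
        intro i
        have hsummable : Summable (fun s => π i s *
            ∑ j', (μ₀ j' * π j' s / t s) * ρ j') := by
          apply Summable.of_norm_bounded (g := fun s => π i s * ∑ j, |ρ j|)
            (((hπ1 i).summable).mul_right _)
          intro s
          rw [Real.norm_eq_abs, abs_mul, abs_of_nonneg (hπ0 i s)]
          apply mul_le_mul_of_nonneg_left ?_ (hπ0 i s)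
          calc |∑ j', (μ₀ j' * π j' s / t s) * ρ j'|
              ≤ ∑ j', |(μ₀ j' * π j' s / t s) * ρ j'| := Finset.abs_sum_le_sum_abs _ _
            _ ≤ ∑ j, |ρ j| := by
                apply Finset.sum_le_sum
                intro j _
                rw [abs_mul]
                apply mul_le_of_le_one_left (abs_nonneg _)
                rw [abs_of_nonneg (div_nonneg (mul_nonneg (h₀pos j).le (hπ0 j s)) (ht0 s))]
                by_cases hts : t s = 0
                · simp [hts]
                · apply div_le_one_of_le₀ ?_ (ht0 s)
                  exact Finset.single_le_sum
                    (fun k _ => mul_nonneg (h₀pos k).le (hπ0 k s)) (Finset.mem_univ j)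
        have hhs : HasSum (fun s => π i s * ∑ j', (μ₀ j' * π j' s / t s) * ρ j') (v i) := by
          rw [hv i]
          exact hsummable.hasSum
        simpa [mul_assoc] using hhs.mul_left (μ₀ i)
    have hzmem : (μ₀, fun i => μ₀ i * v i) ∈ convexHull ℝ K :=
      mem_of_hasSum_convex (convex_convexHull ℝ K) hTclosed ht0 ht1 hp hzsum
    rw [convexHull_eq] at hzmem
    obtain ⟨ι, F, w, y, hw0, hw1, hy, hcm⟩ := hzmem
    rw [Finset.centerMass_eq_of_sum_1 _ _ hw1] at hcm
    have hyK : ∀ i (hi : i ∈ F), ∃ u, u ∈ stdSimplex ℝ (Fin N) ∧ g u = y i :=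
      fun i hi => (Set.mem_image _ _ _).1 (hy i hi)
    choose qq hqmem hqeq using hyK
    set M := Fintype.card {x // x ∈ F} with hMdef
    set e : {x // x ∈ F} ≃ Fin M := Fintype.equivFin _ with hedef
    set idx : Fin M → ι := fun m => (e.symm m : ι) with hidxdef
    have hidx : ∀ m, idx m ∈ F := fun m => (e.symm m).2
    set W : Fin M → ℝ := fun m => w (idx m) with hWdef
    set Q : Fin M → Fin N → ℝ := fun m => qq (idx m) (hidx m) with hQdef
    have hW0 : ∀ m, 0 ≤ W m := fun m => hw0 _ (hidx m)
    have hQmem : ∀ m, Q m ∈ stdSimplex ℝ (Fin N) := fun m => hqmem _ _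
    have hyQ : ∀ m, y (idx m) = g (Q m) := fun m => (hqeq _ _).symm
    have hsum_conv : ∀ {α : Type} [AddCommMonoid α] (f : ι → α),
        ∑ i ∈ F, f i = ∑ m, f (idx m) := by
      intro α _ f
      rw [← Finset.sum_coe_sort F f, ← Equiv.sum_comp e.symm (fun a : {x // x ∈ F} => f a)]
    have hcm' : ∑ m, W m • g (Q m) = ((μ₀, fun i => μ₀ i * v i) :
        (Fin N → ℝ) × (Fin N → ℝ)) := by
      rw [← hcm, hsum_conv (fun i => w i • y i)]
      apply Finset.sum_congr rfl
      intro m _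
      rw [hyQ m]
    have hsum1 : ∀ j, ∑ m, W m * Q m j = μ₀ j := by
      intro j
      have h := congrFun (congrArg Prod.fst hcm') j
      simpa [Prod.fst_sum, Finset.sum_apply, hgdef] using h
    have hsum2 : ∀ j, ∑ m, W m * ((∑ j', Q m j' * ρ j') * Q m j) = μ₀ j * v j := by
      intro j
      have h := congrFun (congrArg Prod.snd hcm') j
      simpa [Prod.snd_sum, Finset.sum_apply, hgdef, mul_assoc] using h
    set CM : Matrix (Fin N) (Fin N) ℝ := ∑ m, Matrix.vecMulVec
        (fun j => Real.sqrt (W m) * Q m j) (fun j => Real.sqrt (W m) * Q m j) with hCMdef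
    have hC : ∀ i j, CM i j = ∑ m, W m * (Q m i * Q m j) := by
      intro i j
      simp only [hCMdef, Matrix.sum_apply, Matrix.vecMulVec_apply]
      apply Finset.sum_congr rfl
      intro m _
      rw [show Real.sqrt (W m) * Q m i * (Real.sqrt (W m) * Q m j)
          = Real.sqrt (W m) * Real.sqrt (W m) * (Q m i * Q m j) from by ring,
        Real.mul_self_sqrt (hW0 m)]
    refine ⟨CM, ⟨M, _, ?_, hCMdef⟩, ?_, ?_⟩
    · intro m j
      exact mul_nonneg (Real.sqrt_nonneg _) ((hQmem m).1 j)
    · funext i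
      simp only [Matrix.mulVec, dotProduct, mul_one]
      calc ∑ j, CM i j
          = ∑ j, ∑ m, W m * (Q m i * Q m j) := Finset.sum_congr rfl fun j _ => hC i j
        _ = ∑ m, ∑ j, W m * (Q m i * Q m j) := Finset.sum_comm
        _ = ∑ m, W m * Q m i := by
            apply Finset.sum_congr rfl
            intro m _
            rw [← Finset.mul_sum, ← Finset.mul_sum, (hQmem m).2, mul_one]
        _ = μ₀ i := hsum1 i
    · funext i
      have key : ((Matrix.diagonal fun i => (μ₀ i)⁻¹) * CM).mulVec ρ i = v i := by
        calc ((Matrix.diagonal fun i => (μ₀ i)⁻¹) * CM).mulVec ρ i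
            = ∑ j, (μ₀ i)⁻¹ * CM i j * ρ j := by
              simp [Matrix.mulVec, dotProduct, Matrix.diagonal_mul]
          _ = (μ₀ i)⁻¹ * ∑ j, CM i j * ρ j := by
              rw [Finset.mul_sum]
              exact Finset.sum_congr rfl fun j _ => mul_assoc _ _ _
          _ = (μ₀ i)⁻¹ * ∑ m, W m * ((∑ j', Q m j' * ρ j') * Q m i) := by
              congr 1
              calc ∑ j, CM i j * ρ j
                  = ∑ j, ∑ m, W m * (Q m i * Q m j) * ρ j := by
                    apply Finset.sum_congr rfl
                    intro j _
                    rw [hC, Finset.sum_mul]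
                _ = ∑ m, ∑ j, W m * (Q m i * Q m j) * ρ j := Finset.sum_comm
                _ = ∑ m, W m * ((∑ j', Q m j' * ρ j') * Q m i) := by
                    apply Finset.sum_congr rfl
                    intro m _
                    rw [Finset.sum_mul, Finset.mul_sum]
                    apply Finset.sum_congr rfl
                    intro j _
                    ring
          _ = (μ₀ i)⁻¹ * (μ₀ i * v i) := by rw [hsum2 i]
          _ = v i := inv_mul_cancel_left₀ (h₀pos i).ne' _
      exact key.symm
  · rintro ⟨C, hCP, hrow, hv⟩
    classical
    obtain ⟨M, x, hx0, hC⟩ := hCP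
    set σ : Fin M → ℝ := fun m => ∑ k, x m k with hσdef
    have hσ0 : ∀ m, 0 ≤ σ m := fun m => Finset.sum_nonneg fun k _ => hx0 m k
    have hCe : ∀ i j, C i j = ∑ m, x m i * x m j := by
      intro i j
      rw [hC]
      simp [Matrix.sum_apply, Matrix.vecMulVec_apply]
    have hrow' : ∀ i, ∑ m, x m i * σ m = μ₀ i := by
      intro i
      have h := congrFun hrow i
      simp only [Matrix.mulVec, dotProduct, mul_one] at h
      calc ∑ m, x m i * σ m = ∑ m, ∑ j, x m i * x m j := by
            apply Finset.sum_congr rfl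
            intro m _
            rw [Finset.mul_sum]
        _ = ∑ j, ∑ m, x m i * x m j := Finset.sum_comm
        _ = ∑ j, C i j := by
            apply Finset.sum_congr rfl
            intro j _
            rw [hCe]
        _ = μ₀ i := h
    refine ⟨Fin M, inferInstance, fun i m => x m i * σ m / μ₀ i, ?_, ?_, ?_⟩
    · intro i m
      exact div_nonneg (mul_nonneg (hx0 m i) (hσ0 m)) (h₀pos i).le
    · intro i
      have : ∑ m, x m i * σ m / μ₀ i = 1 := by
        rw [← Finset.sum_div, hrow', div_self (h₀pos i).ne']
      simpa [this] using hasSum_fintype (fun m => x m i * σ m / μ₀ i)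
    · intro i
      rw [tsum_fintype, hv]
      have key : ∀ m, (x m i * σ m / μ₀ i) *
          (∑ j, (μ₀ j * (x m j * σ m / μ₀ j) / ∑ k, μ₀ k * (x m k * σ m / μ₀ k)) * ρ j)
          = x m i * (∑ j, x m j * ρ j) / μ₀ i := by
        intro m
        have hA : ∑ k, μ₀ k * (x m k * σ m / μ₀ k) = σ m * σ m := by
          calc ∑ k, μ₀ k * (x m k * σ m / μ₀ k) = ∑ k, x m k * σ m := by
                apply Finset.sum_congr rfl
                intro k _
                rw [mul_comm (μ₀ k), div_mul_cancel₀ _ (h₀pos k).ne']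
            _ = σ m * σ m := by rw [← Finset.sum_mul]
        by_cases hz : σ m = 0
        · have hxz : ∀ j, x m j = 0 := by
            intro j
            have := (Finset.sum_eq_zero_iff_of_nonneg (fun k _ => hx0 m k)).1 hz
            exact this j (Finset.mem_univ j)
          simp [hxz]
        · rw [hA]
          have hinner : ∑ j, (μ₀ j * (x m j * σ m / μ₀ j) / (σ m * σ m)) * ρ j
              = (∑ j, x m j * ρ j) / σ m := by
            rw [Finset.sum_div]
            apply Finset.sum_congr rfl
            intro j _
            rw [mul_comm (μ₀ j), div_mul_cancel₀ _ (h₀pos j).ne']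
            field_simp
          rw [hinner]
          rw [div_mul_div_comm]
          rw [show x m i * σ m * ∑ j, x m j * ρ j
              = (x m i * ∑ j, x m j * ρ j) * σ m from by ring,
            show μ₀ i * σ m = μ₀ i * σ m from rfl,
            mul_div_mul_right _ _ hz]
      calc (Matrix.diagonal (fun i => (μ₀ i)⁻¹) * C).mulVec ρ i
          = ∑ j, (μ₀ i)⁻¹ * C i j * ρ j := by
            simp [Matrix.mulVec, dotProduct, Matrix.diagonal_mul]
        _ = ∑ j, ∑ m, x m i * (x m j * ρ j) / μ₀ i := by
            apply Finset.sum_congr rfl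
            intro j _
            rw [hCe, Finset.mul_sum, Finset.sum_mul]
            apply Finset.sum_congr rfl
            intro m _
            rw [div_eq_mul_inv]
            ring
        _ = ∑ m, ∑ j, x m i * (x m j * ρ j) / μ₀ i := Finset.sum_comm
        _ = ∑ m, x m i * (∑ j, x m j * ρ j) / μ₀ i := by
            apply Finset.sum_congr rfl
            intro m _
            rw [← Finset.sum_div, ← Finset.mul_sum]
        _ = ∑ m, (x m i * σ m / μ₀ i) *
            (∑ j, (μ₀ j * (x m j * σ m / μ₀ j) / ∑ k, μ₀ k * (x m k * σ m / μ₀ k)) * ρ j) := by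
            exact (Finset.sum_congr rfl fun m _ => (key m).symm)
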